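/- Let X = (x_j)_{j∈ℤ} be a strictly increasing δ-separated sequence with multiplicity function μ_X : X → {0,...,S}, and let (Y, μ_Y) be a weak limit of integer translates of (X, μ_X), i.e., there are integers k_n with Σ_{x∈X} (1+μ_X(x)) δ_{x-k_n} → Σ_{y∈Y} (1+μ_Y(y)) δ_y in the weak-* topology against C_c(ℝ). Then the weighted maximum gaps satisfy mg(Y, μ_Y) ≤ mg(X, μ_X), where mg(Z, μ) = sup over consecutive points z < z' of Z of (z'-z)/(1+min(μ(z), μ(z'))). -/
import Mathlib
open Set Filter

noncomputable def trap (A B C D t : ℝ) : ℝ :=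
  max 0 (min 1 (min ((t - A) / (B - A)) ((D - t) / (D - C))))

lemma trap_continuous (A B C D : ℝ) : Continuous (trap A B C D) := by
  unfold trap
  exact continuous_const.max (continuous_const.min
    (((continuous_id.sub continuous_const).div_const _).min
      ((continuous_const.sub continuous_id).div_const _)))

lemma trap_nonneg (A B C D t : ℝ) : 0 ≤ trap A B C D t := le_max_left _ _

lemma trap_eq_zero {A B C D t : ℝ} (hAB : A < B) (hCD : C < D)
    (h : t ∉ Icc A D) : trap A B C D t = 0 := by
  simp only [mem_Icc, not_and_or, not_le] at h
  unfold trap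
  rcases h with h | h
  · have h1 : (t - A) / (B - A) ≤ 0 :=
      div_nonpos_of_nonpos_of_nonneg (by linarith) (by linarith)
    have h2 : min 1 (min ((t - A) / (B - A)) ((D - t) / (D - C))) ≤ 0 :=
      le_trans (le_trans (min_le_right _ _) (min_le_left _ _)) h1
    exact max_eq_left h2
  · have h1 : (D - t) / (D - C) ≤ 0 :=
      div_nonpos_of_nonpos_of_nonneg (by linarith) (by linarith)
    have h2 : min 1 (min ((t - A) / (B - A)) ((D - t) / (D - C))) ≤ 0 :=
      le_trans (le_trans (min_le_right _ _) (min_le_right _ _)) h1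
    exact max_eq_left h2

lemma trap_eq_one {A B C D t : ℝ} (hAB : A < B) (hCD : C < D)
    (h : t ∈ Icc B C) : trap A B C D t = 1 := by
  obtain ⟨h1, h2⟩ := h
  unfold trap
  have e1 : 1 ≤ (t - A) / (B - A) := (one_le_div (by linarith)).mpr (by linarith)
  have e2 : 1 ≤ (D - t) / (D - C) := (one_le_div (by linarith)).mpr (by linarith)
  rw [min_eq_left (le_min e1 e2), max_eq_right zero_le_one]

lemma trap_hcs {A B C D : ℝ} (hAB : A < B) (hCD : C < D) :
    HasCompactSupport (trap A B C D) :=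
  HasCompactSupport.intro isCompact_Icc (fun _ ht => trap_eq_zero hAB hCD ht)

lemma sep_growth (x : ℤ → ℝ) (δ : ℝ) (hsep : ∀ j : ℤ, δ ≤ x (j + 1) - x j)
    (i : ℤ) (n : ℕ) : δ * n ≤ x (i + n) - x i := by
  induction n with
  | zero => simp
  | succ n ih =>
    have h := hsep (i + n)
    have e : (i + ((n : ℤ) + 1)) = (i + n) + 1 := by ring
    push_cast
    rw [e]
    push_cast at ih
    linarith

lemma finite_mem (x : ℤ → ℝ) (δ : ℝ) (hδ : 0 < δ)
    (hsep : ∀ j : ℤ, δ ≤ x (j + 1) - x j) (A B : ℝ) :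
    {i : ℤ | x i ∈ Icc A B}.Finite := by
  apply Set.Finite.subset (Set.finite_Icc (-(max ⌈(x 0 - A) / δ⌉ 0)) (max ⌈(B - x 0) / δ⌉ 0))
  intro i hi
  obtain ⟨h1, h2⟩ := hi
  simp only [mem_Icc]
  constructor
  · rcases le_or_gt 0 i with h | h
    · exact le_trans (neg_nonpos.mpr (le_max_right _ _)) h
    · have hg := sep_growth x δ hsep i (-i).toNat
      have ht : ((-i).toNat : ℤ) = -i := Int.toNat_of_nonneg (by omega)
      rw [show i + ((-i).toNat : ℤ) = 0 by omega] at hg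
      have hcast : ((((-i).toNat : ℤ)) : ℝ) = ((-i : ℤ) : ℝ) := by rw [ht]
      have hle : ((-i : ℤ) : ℝ) ≤ (x 0 - A) / δ := by
        rw [le_div_iff₀ hδ]
        push_cast at hcast ⊢
        nlinarith [hg, h1]
      have : ((-i : ℤ) : ℝ) ≤ (⌈(x 0 - A) / δ⌉ : ℝ) := le_trans hle (Int.le_ceil _)
      have : -i ≤ ⌈(x 0 - A) / δ⌉ := by exact_mod_cast this
      have := le_max_left ⌈(x 0 - A) / δ⌉ (0 : ℤ)
      linarith
  · rcases le_or_gt i 0 with h | h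
    · exact le_trans h (le_max_right _ _)
    · have hg := sep_growth x δ hsep 0 i.toNat
      have ht : ((i.toNat : ℤ)) = i := Int.toNat_of_nonneg (by omega)
      rw [show (0 : ℤ) + (i.toNat : ℤ) = i by omega] at hg
      have hle : ((i : ℤ) : ℝ) ≤ (B - x 0) / δ := by
        rw [le_div_iff₀ hδ]
        have hcast : (((i.toNat : ℤ)) : ℝ) = ((i : ℤ) : ℝ) := by rw [ht]
        push_cast at hcast ⊢
        nlinarith [hg, h2]
      have : ((i : ℤ) : ℝ) ≤ (⌈(B - x 0) / δ⌉ : ℝ) := le_trans hle (Int.le_ceil _)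
      have : i ≤ ⌈(B - x 0) / δ⌉ := by exact_mod_cast this
      have := le_max_left ⌈(B - x 0) / δ⌉ (0 : ℤ)
      linarith

lemma summable_aux (x : ℤ → ℝ) (δ : ℝ) (hδ : 0 < δ)
    (hsep : ∀ j : ℤ, δ ≤ x (j + 1) - x j) (μ : ℤ → ℕ)
    (f : ℝ → ℝ) (A B : ℝ) (hf : ∀ t, t ∉ Icc A B → f t = 0) (c : ℝ) :
    Summable (fun i : ℤ => (1 + (μ i : ℝ)) * f (x i - c)) := by
  apply summable_of_ne_finset_zero (s := (finite_mem x δ hδ hsep (A + c) (B + c)).toFinset)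
  intro i hi
  rw [Set.Finite.mem_toFinset] at hi
  have hmem : x i - c ∉ Icc A B := by
    simp only [mem_setOf_eq, mem_Icc, not_and_or, not_le] at hi ⊢
    rcases hi with h | h
    · left; linarith
    · right; linarith
  rw [hf _ hmem, mul_zero]

lemma exists_last (P : ℤ → Prop) :
    ∀ n : ℕ, ∀ i₀ : ℤ, P i₀ → ¬ P (i₀ + n) →
      ∃ i, i₀ ≤ i ∧ i < i₀ + n ∧ P i ∧ ¬ P (i + 1) := by
  intro n
  induction n with
  | zero => intro i₀ h0 h1; simp at h1; exact absurd h0 h1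
  | succ n ih =>
    intro i₀ h0 h1
    by_cases hP : P (i₀ + n)
    · refine ⟨i₀ + n, by omega, by omega, hP, ?_⟩
      have e : (i₀ + ((n + 1 : ℕ) : ℤ)) = i₀ + n + 1 := by push_cast; ring
      rwa [e] at h1

    · obtain ⟨i, hi1, hi2, hi3, hi4⟩ := ih i₀ h0 hP
      exact ⟨i, hi1, by omega, hi3, hi4⟩

set_option maxHeartbeats 1000000 in
/-- The weighted maximum gap does not increase under weak limits of integer translates. -/
theorem stmt_19 (S : ℕ) (x : ℤ → ℝ) (hmono : StrictMono x)
    (δ : ℝ) (hδ : 0 < δ) (hsep : ∀ j : ℤ, δ ≤ x (j + 1) - x j)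
    (μX : ℤ → ℕ) (hμX : ∀ j, μX j ≤ S)
    (y : ℤ → ℝ) (hymono : StrictMono y) (μY : ℤ → ℕ)
    (k : ℕ → ℤ)
    (hconv : ∀ f : ℝ → ℝ, Continuous f → HasCompactSupport f →
      Filter.Tendsto (fun n => ∑' j : ℤ, (1 + (μX j : ℝ)) * f (x j - k n))
        Filter.atTop (nhds (∑' j : ℤ, (1 + (μY j : ℝ)) * f (y j))))
    (a : ℝ)
    (hgap : ∀ j : ℤ, x (j + 1) - x j ≤ a * (1 + (min (μX j) (μX (j + 1)) : ℝ))) :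
    ∀ j : ℤ, y (j + 1) - y j ≤ a * (1 + (min (μY j) (μY (j + 1)) : ℝ)) := by
  have hgap' : ∀ i : ℤ, x (i + 1) - x i ≤ a * (1 + ((min (μX i) (μX (i + 1)) : ℕ) : ℝ)) := by
    intro i; rw [Nat.cast_min]; exact hgap i
  intro j
  by_contra hcon
  push_neg at hcon
  rw [← Nat.cast_min] at hcon
  have ha : 0 < a := by
    have h1 := hsep 0
    have h2 := hgap' 0
    have h3 : (0:ℝ) ≤ ((min (μX 0) (μX (0 + 1)) : ℕ) : ℝ) := Nat.cast_nonneg _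
    nlinarith
  set L := y j with hLdef
  set R := y (j + 1) with hRdef
  set m : ℕ := min (μY j) (μY (j + 1)) with hmdef
  have hcon' : a * (1 + (m : ℝ)) < R - L := hcon
  have hG : 0 < R - L := by
    have := hymono (lt_add_one j); simp only [← hLdef, ← hRdef] at this ⊢; linarith
  have hy1 : 0 < L - y (j - 1) := by
    have := hymono (show j - 1 < j by omega); linarith
  have hy2 : 0 < y (j + 2) - R := by
    have := hymono (show j + 1 < j + 2 by omega); linarith
  set ε := min ((R - L - a * (1 + (m : ℝ))) / 3)
      (min ((L - y (j - 1)) / 3) (min ((y (j + 2) - R) / 3) ((R - L) / 3))) with hεdef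
  have hε0 : 0 < ε := by
    apply lt_min (by linarith)
    exact lt_min (by linarith) (lt_min (by linarith) (by linarith))
  have hε1 : 3 * ε ≤ R - L - a * (1 + (m : ℝ)) := by
    have := min_le_left ((R - L - a * (1 + (m : ℝ))) / 3)
      (min ((L - y (j - 1)) / 3) (min ((y (j + 2) - R) / 3) ((R - L) / 3)))
    linarith
  have hεr := min_le_right ((R - L - a * (1 + (m : ℝ))) / 3)
      (min ((L - y (j - 1)) / 3) (min ((y (j + 2) - R) / 3) ((R - L) / 3)))
  have hε2 : 3 * ε ≤ L - y (j - 1) := by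
    have := le_trans hεr (min_le_left _ _); linarith
  have hεrr := le_trans hεr (min_le_right ((L - y (j-1))/3) (min ((y (j + 2) - R) / 3) ((R - L) / 3)))
  have hε3 : 3 * ε ≤ y (j + 2) - R := by
    have := le_trans hεrr (min_le_left _ _); linarith
  have hε4 : 3 * ε ≤ R - L := by
    have := le_trans hεrr (min_le_right _ _); linarith
  clear hεr hεrr
  -- monotonicity facts
  have hyle : ∀ i : ℤ, i ≤ j → y i ≤ L := fun i hi => hymono.monotone hi
  have hyge : ∀ i : ℤ, j + 1 ≤ i → R ≤ y i := fun i hi => hymono.monotone hi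
  have hyle' : ∀ i : ℤ, i ≤ j - 1 → y i ≤ y (j - 1) := fun i hi => hymono.monotone hi
  have hyge' : ∀ i : ℤ, j + 2 ≤ i → y (j + 2) ≤ y i := fun i hi => hymono.monotone hi
  -- the five test functions
  have key : ∀ A B C D : ℝ, A < B → C < D →
      Filter.Tendsto (fun n => ∑' i : ℤ, (1 + (μX i : ℝ)) * trap A B C D (x i - k n))
        Filter.atTop (nhds (∑' i : ℤ, (1 + (μY i : ℝ)) * trap A B C D (y i))) :=
    fun A B C D hAB hCD => hconv (trap A B C D) (trap_continuous A B C D) (trap_hcs hAB hCD)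
  -- f1 : middle bump, limit 0
  have hlim1 : (∑' i : ℤ, (1 + (μY i : ℝ)) * trap (L + ε/2) (L + ε) (R - ε) (R - ε/2) (y i)) = 0 := by
    have hz : ∀ i : ℤ, (1 + (μY i : ℝ)) * trap (L + ε/2) (L + ε) (R - ε) (R - ε/2) (y i) = 0 := by
      intro i
      have hmem : y i ∉ Icc (L + ε/2) (R - ε/2) := by
        simp only [mem_Icc, not_and_or, not_le]
        rcases le_or_gt i j with h | h
        · left; have := hyle i h; linarith
        · right; have := hyge i (by omega); linarith
      rw [trap_eq_zero (by linarith) (by linarith) hmem, mul_zero]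
    calc (∑' i : ℤ, (1 + (μY i : ℝ)) * trap (L + ε/2) (L + ε) (R - ε) (R - ε/2) (y i))
        = ∑' _ : ℤ, (0:ℝ) := tsum_congr hz
      _ = 0 := tsum_zero
  have E1 : ∀ᶠ n in atTop,
      (∑' i : ℤ, (1 + (μX i : ℝ)) * trap (L + ε/2) (L + ε) (R - ε) (R - ε/2) (x i - k n)) < 1/2 := by
    have h := key (L + ε/2) (L + ε) (R - ε) (R - ε/2) (by linarith) (by linarith)
    rw [hlim1] at h
    exact h.eventually_lt_const (by norm_num)
  -- fL : bump at L, limit 1 + μY j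
  have hlim2 : (∑' i : ℤ, (1 + (μY i : ℝ)) * trap (L - ε) (L - ε/2) (L + ε/2) (L + ε) (y i))
      = 1 + (μY j : ℝ) := by
    rw [tsum_eq_single j ?_]
    · rw [trap_eq_one (by linarith) (by linarith) ⟨by simp [hLdef]; linarith, by simp [hLdef]; linarith⟩, mul_one]
    · intro i hi
      have hmem : y i ∉ Icc (L - ε) (L + ε) := by
        simp only [mem_Icc, not_and_or, not_le]
        rcases lt_or_gt_of_ne hi with h | h
        · left; have := hyle' i (by omega); linarith
        · right; have := hyge i (by omega); linarith
      rw [trap_eq_zero (by linarith) (by linarith) hmem, mul_zero]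
  have E2 : ∀ᶠ n in atTop,
      1/2 < (∑' i : ℤ, (1 + (μX i : ℝ)) * trap (L - ε) (L - ε/2) (L + ε/2) (L + ε) (x i - k n)) := by
    have h := key (L - ε) (L - ε/2) (L + ε/2) (L + ε) (by linarith) (by linarith)
    rw [hlim2] at h
    exact h.eventually_const_lt (by have := Nat.cast_nonneg (α := ℝ) (μY j); linarith)
  -- fR : bump at R, limit 1 + μY (j+1)
  have hlim3 : (∑' i : ℤ, (1 + (μY i : ℝ)) * trap (R - ε) (R - ε/2) (R + ε/2) (R + ε) (y i))
      = 1 + (μY (j+1) : ℝ) := by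
    rw [tsum_eq_single (j+1) ?_]
    · rw [trap_eq_one (by linarith) (by linarith) ⟨by simp [hRdef]; linarith, by simp [hRdef]; linarith⟩, mul_one]
    · intro i hi
      have hmem : y i ∉ Icc (R - ε) (R + ε) := by
        simp only [mem_Icc, not_and_or, not_le]
        rcases lt_or_gt_of_ne hi with h | h
        · left; have := hyle i (by omega); linarith
        · right; have := hyge' i (by omega); linarith
      rw [trap_eq_zero (by linarith) (by linarith) hmem, mul_zero]
  have E3 : ∀ᶠ n in atTop,
      1/2 < (∑' i : ℤ, (1 + (μX i : ℝ)) * trap (R - ε) (R - ε/2) (R + ε/2) (R + ε) (x i - k n)) := by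
    have h := key (R - ε) (R - ε/2) (R + ε/2) (R + ε) (by linarith) (by linarith)
    rw [hlim3] at h
    exact h.eventually_const_lt (by have := Nat.cast_nonneg (α := ℝ) (μY (j+1)); linarith)
  -- f2L : wide bump at L, limit 1 + μY j
  have hlim4 : (∑' i : ℤ, (1 + (μY i : ℝ)) * trap (L - 2*ε) (L - ε) (L + ε) (L + 2*ε) (y i))
      = 1 + (μY j : ℝ) := by
    rw [tsum_eq_single j ?_]
    · rw [trap_eq_one (by linarith) (by linarith) ⟨by simp [hLdef]; linarith, by simp [hLdef]; linarith⟩, mul_one]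
    · intro i hi
      have hmem : y i ∉ Icc (L - 2*ε) (L + 2*ε) := by
        simp only [mem_Icc, not_and_or, not_le]
        rcases lt_or_gt_of_ne hi with h | h
        · left; have := hyle' i (by omega); linarith
        · right; have := hyge i (by omega); linarith
      rw [trap_eq_zero (by linarith) (by linarith) hmem, mul_zero]
  have E4 : ∀ᶠ n in atTop,
      (∑' i : ℤ, (1 + (μX i : ℝ)) * trap (L - 2*ε) (L - ε) (L + ε) (L + 2*ε) (x i - k n))
        < 1 + (μY j : ℝ) + 1/2 := by
    have h := key (L - 2*ε) (L - ε) (L + ε) (L + 2*ε) (by linarith) (by linarith)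
    rw [hlim4] at h
    exact h.eventually_lt_const (by norm_num)
  -- f2R : wide bump at R, limit 1 + μY (j+1)
  have hlim5 : (∑' i : ℤ, (1 + (μY i : ℝ)) * trap (R - 2*ε) (R - ε) (R + ε) (R + 2*ε) (y i))
      = 1 + (μY (j+1) : ℝ) := by
    rw [tsum_eq_single (j+1) ?_]
    · rw [trap_eq_one (by linarith) (by linarith) ⟨by simp [hRdef]; linarith, by simp [hRdef]; linarith⟩, mul_one]
    · intro i hi
      have hmem : y i ∉ Icc (R - 2*ε) (R + 2*ε) := by
        simp only [mem_Icc, not_and_or, not_le]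
        rcases lt_or_gt_of_ne hi with h | h
        · left; have := hyle i (by omega); linarith
        · right; have := hyge' i (by omega); linarith
      rw [trap_eq_zero (by linarith) (by linarith) hmem, mul_zero]
  have E5 : ∀ᶠ n in atTop,
      (∑' i : ℤ, (1 + (μX i : ℝ)) * trap (R - 2*ε) (R - ε) (R + ε) (R + 2*ε) (x i - k n))
        < 1 + (μY (j+1) : ℝ) + 1/2 := by
    have h := key (R - 2*ε) (R - ε) (R + ε) (R + 2*ε) (by linarith) (by linarith)
    rw [hlim5] at h
    exact h.eventually_lt_const (by norm_num)
  obtain ⟨n, h1n, h2n, h3n, h4n, h5n⟩ := (E1.and (E2.and (E3.and (E4.and E5)))).exists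
  -- summability at this n
  have S1 : Summable (fun i : ℤ =>
      (1 + (μX i : ℝ)) * trap (L + ε/2) (L + ε) (R - ε) (R - ε/2) (x i - ((k n : ℤ) : ℝ))) :=
    summable_aux x δ hδ hsep μX _ (L + ε/2) (R - ε/2)
      (fun t ht => trap_eq_zero (by linarith) (by linarith) ht) _
  have S4 : Summable (fun i : ℤ =>
      (1 + (μX i : ℝ)) * trap (L - 2*ε) (L - ε) (L + ε) (L + 2*ε) (x i - ((k n : ℤ) : ℝ))) :=
    summable_aux x δ hδ hsep μX _ (L - 2*ε) (L + 2*ε)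
      (fun t ht => trap_eq_zero (by linarith) (by linarith) ht) _
  have S5 : Summable (fun i : ℤ =>
      (1 + (μX i : ℝ)) * trap (R - 2*ε) (R - ε) (R + ε) (R + 2*ε) (x i - ((k n : ℤ) : ℝ))) :=
    summable_aux x δ hδ hsep μX _ (R - 2*ε) (R + 2*ε)
      (fun t ht => trap_eq_zero (by linarith) (by linarith) ht) _
  -- there is a translated point near L
  have hexL : ∃ i : ℤ, x i - k n ∈ Icc (L - ε) (L + ε) := by
    by_contra hno
    push_neg at hno
    have hz : (∑' i : ℤ, (1 + (μX i : ℝ)) * trap (L - ε) (L - ε/2) (L + ε/2) (L + ε) (x i - k n)) = 0 := by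
      calc (∑' i : ℤ, (1 + (μX i : ℝ)) * trap (L - ε) (L - ε/2) (L + ε/2) (L + ε) (x i - k n))
          = ∑' _ : ℤ, (0:ℝ) := tsum_congr (fun i => by
            rw [trap_eq_zero (by linarith) (by linarith) (hno i), mul_zero])
        _ = 0 := tsum_zero
    rw [hz] at h2n; norm_num at h2n
  obtain ⟨iL, hiLmem⟩ := hexL
  -- there is a translated point near R
  have hexR : ∃ i : ℤ, x i - k n ∈ Icc (R - ε) (R + ε) := by
    by_contra hno
    push_neg at hno
    have hz : (∑' i : ℤ, (1 + (μX i : ℝ)) * trap (R - ε) (R - ε/2) (R + ε/2) (R + ε) (x i - k n)) = 0 := by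
      calc (∑' i : ℤ, (1 + (μX i : ℝ)) * trap (R - ε) (R - ε/2) (R + ε/2) (R + ε) (x i - k n))
          = ∑' _ : ℤ, (0:ℝ) := tsum_congr (fun i => by
            rw [trap_eq_zero (by linarith) (by linarith) (hno i), mul_zero])
        _ = 0 := tsum_zero
    rw [hz] at h3n; norm_num at h3n
  obtain ⟨iR, hiRmem⟩ := hexR
  -- no translated point in the middle
  have hmid : ∀ i : ℤ, x i - k n ∉ Icc (L + ε) (R - ε) := by
    intro i hi
    have hterm : (1 + (μX i : ℝ)) * trap (L + ε/2) (L + ε) (R - ε) (R - ε/2) (x i - k n)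
        ≤ ∑' i : ℤ, (1 + (μX i : ℝ)) * trap (L + ε/2) (L + ε) (R - ε) (R - ε/2) (x i - k n) :=
      Summable.le_tsum S1 i (fun b _ => mul_nonneg (by positivity) (trap_nonneg _ _ _ _ _))
    rw [trap_eq_one (by linarith) (by linarith) hi, mul_one] at hterm
    have h1 : (1:ℝ) ≤ 1 + (μX i : ℝ) := by have := Nat.cast_nonneg (α := ℝ) (μX i); linarith
    linarith
  -- iL < iR and find the straddling pair
  have hLR : iL < iR := by
    have hx : x iL < x iR := by
      have h1 := hiLmem.2; have h2 := hiRmem.1; linarith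
    exact hmono.lt_iff_lt.mp hx
  have hnotP : ¬ (x (iL + ((iR - iL).toNat : ℤ)) - k n ≤ L + ε) := by
    rw [show (iL + ((iR - iL).toNat : ℤ)) = iR by omega]
    have := hiRmem.1; push_neg; linarith
  obtain ⟨i, hi1, hi2, hi3, hi4⟩ :=
    exists_last (fun i => x i - k n ≤ L + ε) (iR - iL).toNat iL hiLmem.2 hnotP
  have hi2' : i < iR := by omega
  push_neg at hi4
  have hq : R - ε < x (i + 1) - k n := by
    have hm := hmid (i + 1)
    simp only [mem_Icc, not_and_or, not_le] at hm
    rcases hm with h | h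
    · linarith
    · exact h
  have hploc : L - ε ≤ x i - k n := by
    have := hmono.monotone hi1; have := hiLmem.1; linarith
  have hqloc : x (i + 1) - k n ≤ R + ε := by
    have := hmono.monotone (show i + 1 ≤ iR by omega); have := hiRmem.2; linarith
  -- the gap forces high multiplicity on both endpoints
  have hmlt : m < min (μX i) (μX (i + 1)) := by
    have hg := hgap' i
    have h1 : a * (1 + (m : ℝ)) < a * (1 + ((min (μX i) (μX (i + 1)) : ℕ) : ℝ)) := by
      linarith
    have h2 : (m : ℝ) < ((min (μX i) (μX (i + 1)) : ℕ) : ℝ) := by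
      have := (mul_lt_mul_iff_right₀ ha).mp h1; linarith
    exact_mod_cast h2
  have hXi : (m : ℝ) + 1 ≤ (μX i : ℝ) := by
    have : m + 1 ≤ μX i := lt_of_lt_of_le hmlt (min_le_left _ _)
    exact_mod_cast this
  have hXi1 : (m : ℝ) + 1 ≤ (μX (i + 1) : ℝ) := by
    have : m + 1 ≤ μX (i + 1) := lt_of_lt_of_le hmlt (min_le_right _ _)
    exact_mod_cast this
  -- final contradiction by cases on which side attains the min
  rcases le_total (μY j) (μY (j + 1)) with hcase | hcase
  · have hmj : (μY j : ℝ) = (m : ℝ) := by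
      rw [hmdef]; exact_mod_cast (min_eq_left hcase).symm
    have hmem : x i - k n ∈ Icc (L - ε) (L + ε) := ⟨hploc, hi3⟩
    have hterm : (1 + (μX i : ℝ)) * trap (L - 2*ε) (L - ε) (L + ε) (L + 2*ε) (x i - k n)
        ≤ ∑' i : ℤ, (1 + (μX i : ℝ)) * trap (L - 2*ε) (L - ε) (L + ε) (L + 2*ε) (x i - k n) :=
      Summable.le_tsum S4 i (fun b _ => mul_nonneg (by positivity) (trap_nonneg _ _ _ _ _))
    rw [trap_eq_one (by linarith) (by linarith) hmem, mul_one] at hterm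
    linarith
  · have hmj : (μY (j + 1) : ℝ) = (m : ℝ) := by
      rw [hmdef]; exact_mod_cast (min_eq_right hcase).symm
    have hmem : x (i + 1) - k n ∈ Icc (R - ε) (R + ε) := ⟨le_of_lt hq, hqloc⟩
    have hterm : (1 + (μX (i + 1) : ℝ)) * trap (R - 2*ε) (R - ε) (R + ε) (R + 2*ε) (x (i + 1) - k n)
        ≤ ∑' i : ℤ, (1 + (μX i : ℝ)) * trap (R - 2*ε) (R - ε) (R + ε) (R + 2*ε) (x i - k n) :=
      Summable.le_tsum S5 (i + 1) (fun b _ => mul_nonneg (by positivity) (trap_nonneg _ _ _ _ _))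
    rw [trap_eq_one (by linarith) (by linarith) hmem, mul_one] at hterm
    linarith
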